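/- For closed subspaces X₁, X₂ of a Hilbert space that are finite rank perturbations of each other, the relative index is antisymmetric: [X₂, X₁] = −[X₁, X₂], and it equals the relative index of the orthogonal complements: [X₁^⊥, X₂^⊥] = −[X₁, X₂]. -/

import Mathlib

/-- The relative index of closed subspaces `X₁, X₂` computed with a finite-dimensional
subspace `Y` such that `X₂ ⊆ X₁ ⊕ Y`: `[X₁, X₂]_Y := dim((X₁ ⊕ Y)/X₂) − dim Y`. -/
noncomputable def relIdxWith {H : Type*} [NormedAddCommGroup H]
    [InnerProductSpace ℂ H] (X₁ X₂ Y : Submodule ℂ H) : ℤ :=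
  (Module.finrank ℂ (↥(X₁ ⊔ Y) ⧸ X₂.comap (X₁ ⊔ Y).subtype) : ℤ) -
    (Module.finrank ℂ Y : ℤ)

/-- `Y` is an admissible witness for the relative index `[X₁, X₂]`. -/
def relIdxWitness {H : Type*} [NormedAddCommGroup H] [InnerProductSpace ℂ H]
    (X₁ X₂ Y : Submodule ℂ H) : Prop :=
  FiniteDimensional ℂ Y ∧ Disjoint X₁ Y ∧ X₂ ≤ X₁ ⊔ Y ∧
    FiniteDimensional ℂ (↥(X₁ ⊔ Y) ⧸ X₂.comap (X₁ ⊔ Y).subtype)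

open Module Submodule

section Aux

variable {H : Type*} [NormedAddCommGroup H] [InnerProductSpace ℂ H]

/-- The natural map `A/X → B/X` for `A ≤ B`. -/
noncomputable def quotIncl (X : Submodule ℂ H) {A B : Submodule ℂ H} (hAB : A ≤ B) :
    (↥A ⧸ X.comap A.subtype) →ₗ[ℂ] ↥B ⧸ X.comap B.subtype :=
  Submodule.mapQ _ _ (Submodule.inclusion hAB) (by intro a ha; simpa using ha)

theorem quotIncl_injective (X : Submodule ℂ H) {A B : Submodule ℂ H} (hAB : A ≤ B) :
    Function.Injective (quotIncl X hAB) := by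
  rw [← LinearMap.ker_eq_bot, eq_bot_iff]
  rintro x hx
  obtain ⟨a, rfl⟩ := Submodule.Quotient.mk_surjective _ x
  have h1 : (Submodule.inclusion hAB a : ↥B) ∈ X.comap B.subtype := by
    have := LinearMap.mem_ker.1 hx
    rwa [quotIncl, Submodule.mapQ_apply, Submodule.Quotient.mk_eq_zero] at this
  have h2 : (a : H) ∈ X := h1
  simpa [Submodule.Quotient.mk_eq_zero] using h2

theorem quotIncl_surjective (X : Submodule ℂ H) {A B : Submodule ℂ H} (hAB : A ≤ B)
    (hXB : X ≤ B) (hsur : B ≤ X ⊔ A) :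
    Function.Surjective (quotIncl X hAB) := by
  intro z
  obtain ⟨b, rfl⟩ := Submodule.Quotient.mk_surjective _ z
  obtain ⟨x, hx, a, ha, hxa⟩ := Submodule.mem_sup.1 (hsur b.2)
  refine ⟨Submodule.Quotient.mk ⟨a, ha⟩, ?_⟩
  rw [quotIncl, Submodule.mapQ_apply, Submodule.Quotient.eq]
  have hmem : ((Submodule.inclusion hAB ⟨a, ha⟩ : ↥B) : H) - (b : H) = -x := by
    simp only [Submodule.coe_inclusion]
    rw [← hxa]; abel
  show ((Submodule.inclusion hAB ⟨a, ha⟩ : ↥B) - b : ↥B) ∈ X.comap B.subtype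
  have : ((Submodule.inclusion hAB ⟨a, ha⟩ - b : ↥B) : H) ∈ X := by
    rw [AddSubgroupClass.coe_sub, hmem]
    exact X.neg_mem hx
  exact this

/-- The natural isomorphism `A/X ≃ B/X` when `A ≤ B ≤ X ⊔ A` and `X ≤ B`. -/
noncomputable def quotEquivSup (X : Submodule ℂ H) {A B : Submodule ℂ H} (hAB : A ≤ B)
    (hXB : X ≤ B) (hsur : B ≤ X ⊔ A) :
    (↥A ⧸ X.comap A.subtype) ≃ₗ[ℂ] ↥B ⧸ X.comap B.subtype :=
  LinearEquiv.ofBijective (quotIncl X hAB)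
    ⟨quotIncl_injective X hAB, quotIncl_surjective X hAB hXB hsur⟩

/-- Additivity of dimension for a tower `Xs ≤ X ≤ Z`. -/
theorem quot_tower (Xs X Z : Submodule ℂ H) (h1 : Xs ≤ X) (h2 : X ≤ Z)
    [FiniteDimensional ℂ (↥Z ⧸ X.comap Z.subtype)]
    [FiniteDimensional ℂ (↥X ⧸ Xs.comap X.subtype)] :
    FiniteDimensional ℂ (↥Z ⧸ Xs.comap Z.subtype) ∧
      finrank ℂ (↥Z ⧸ Xs.comap Z.subtype)
        = finrank ℂ (↥Z ⧸ X.comap Z.subtype) + finrank ℂ (↥X ⧸ Xs.comap X.subtype) := by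
  set p := Xs.comap Z.subtype with hp
  set q := X.comap Z.subtype with hq
  have hpq : p ≤ q := fun z hz => h1 hz
  set f : ↥X →ₗ[ℂ] ↥Z ⧸ p := p.mkQ.comp (Submodule.inclusion h2) with hf
  have hker : LinearMap.ker f = Xs.comap X.subtype := by
    ext a
    simp only [hf, LinearMap.mem_ker, LinearMap.comp_apply, Submodule.mkQ_apply,
      Submodule.Quotient.mk_eq_zero, Submodule.mem_comap]
    rfl
  have hrange : LinearMap.range f = Submodule.map p.mkQ q := by
    rw [hf, LinearMap.range_comp, Submodule.range_inclusion]
  let e2 : (↥X ⧸ Xs.comap X.subtype) ≃ₗ[ℂ] ↥(Submodule.map p.mkQ q) :=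
    ((Submodule.quotEquivOfEq _ _ hker.symm).trans f.quotKerEquivRange).trans
      (LinearEquiv.ofEq _ _ hrange)
  let e1 := Submodule.quotientQuotientEquivQuotient p q hpq
  haveI : FiniteDimensional ℂ ↥(Submodule.map p.mkQ q) := Module.Finite.equiv e2
  haveI : FiniteDimensional ℂ ((↥Z ⧸ p) ⧸ Submodule.map p.mkQ q) :=
    Module.Finite.equiv e1.symm
  haveI hfin : FiniteDimensional ℂ (↥Z ⧸ p) := by
    have hn1 : IsNoetherian ℂ ↥(Submodule.map p.mkQ q) := IsNoetherian.iff_fg.mpr inferInstance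
    have hn2 : IsNoetherian ℂ ((↥Z ⧸ p) ⧸ Submodule.map p.mkQ q) :=
      IsNoetherian.iff_fg.mpr inferInstance
    exact IsNoetherian.iff_fg.mp ((isNoetherian_iff_submodule_quotient _).2 ⟨hn1, hn2⟩)
  refine ⟨hfin, ?_⟩
  have hrn := Submodule.finrank_quotient_add_finrank (R := ℂ) (M := ↥Z ⧸ p)
    (Submodule.map p.mkQ q)
  have ha : finrank ℂ ((↥Z ⧸ p) ⧸ Submodule.map p.mkQ q) = finrank ℂ (↥Z ⧸ q) :=
    e1.finrank_eq
  have hb : finrank ℂ (↥X ⧸ Xs.comap X.subtype) = finrank ℂ ↥(Submodule.map p.mkQ q) :=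
    e2.finrank_eq
  omega

/-- The key formula: the relative index with any admissible witness equals
`dim A/(A ⊓ B) − dim B/(A ⊓ B)`. -/
theorem relIdx_key (A B Y : Submodule ℂ H) (h : relIdxWitness A B Y) :
    FiniteDimensional ℂ (↥A ⧸ ((A ⊓ B).comap A.subtype)) ∧
    FiniteDimensional ℂ (↥B ⧸ ((A ⊓ B).comap B.subtype)) ∧
    relIdxWith A B Y =
      (finrank ℂ (↥A ⧸ ((A ⊓ B).comap A.subtype)) : ℤ) -
        (finrank ℂ (↥B ⧸ ((A ⊓ B).comap B.subtype)) : ℤ) := by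
  obtain ⟨hfY, hd, hle, hfq⟩ := h
  set Z := A ⊔ Y with hZ
  haveI : FiniteDimensional ℂ (↥Z ⧸ B.comap Z.subtype) := hfq
  have hbot : A.comap Y.subtype = ⊥ := by
    rw [eq_bot_iff]
    rintro ⟨y, hy⟩ hAy
    have hmem : (y : H) ∈ A ⊓ Y := ⟨hAy, hy⟩
    rw [hd.eq_bot] at hmem
    exact (Submodule.mem_bot _).2 (Subtype.ext (by simpa using hmem))
  let eZA : (↥Y ⧸ A.comap Y.subtype) ≃ₗ[ℂ] (↥Z ⧸ A.comap Z.subtype) :=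
    quotEquivSup A le_sup_right le_sup_left hZ.le
  let eY : (↥Y ⧸ A.comap Y.subtype) ≃ₗ[ℂ] ↥Y := Submodule.quotEquivOfEqBot _ hbot
  haveI : FiniteDimensional ℂ (↥Z ⧸ A.comap Z.subtype) :=
    Module.Finite.equiv (eY.symm.trans eZA)
  have hfrY : finrank ℂ (↥Z ⧸ A.comap Z.subtype) = finrank ℂ ↥Y :=
    (eZA.symm.trans eY).finrank_eq
  have hABZ : A ⊔ B ≤ Z := sup_le le_sup_left hle
  have hBAZ : B ⊔ A ≤ Z := sup_le hle le_sup_left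
  haveI hAfin : FiniteDimensional ℂ (↥A ⧸ ((A ⊓ B).comap A.subtype)) := by
    haveI : FiniteDimensional ℂ (↥(A ⊔ B) ⧸ B.comap (A ⊔ B).subtype) :=
      FiniteDimensional.of_injective (quotIncl B hABZ) (quotIncl_injective B hABZ)
    exact Module.Finite.equiv (LinearMap.quotientInfEquivSupQuotient A B).symm
  haveI hBfin : FiniteDimensional ℂ (↥B ⧸ ((A ⊓ B).comap B.subtype)) := by
    rw [inf_comm A B]
    haveI : FiniteDimensional ℂ (↥(B ⊔ A) ⧸ A.comap (B ⊔ A).subtype) :=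
      FiniteDimensional.of_injective (quotIncl A hBAZ) (quotIncl_injective A hBAZ)
    exact Module.Finite.equiv (LinearMap.quotientInfEquivSupQuotient B A).symm
  obtain ⟨hfin1, ht1⟩ := quot_tower (A ⊓ B) A Z inf_le_left le_sup_left
  obtain ⟨hfin2, ht2⟩ := quot_tower (A ⊓ B) B Z inf_le_right hle
  refine ⟨hAfin, hBfin, ?_⟩
  have h0 : relIdxWith A B Y =
      (finrank ℂ (↥Z ⧸ B.comap Z.subtype) : ℤ) - (finrank ℂ ↥Y : ℤ) := rfl
  rw [h0]
  rw [hfrY] at ht1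
  omega

/-- The sum of a closed subspace and a finite-dimensional subspace is closed. -/
theorem isClosed_sup_of_finiteDimensional [CompleteSpace H] {X F : Submodule ℂ H}
    (hX : IsClosed (X : Set H)) [FiniteDimensional ℂ ↥F] :
    IsClosed ((X ⊔ F : Submodule ℂ H) : Set H) := by
  haveI : IsClosed (X : Set H) := hX
  have hcont : Continuous X.mkQ := by
    apply AddMonoidHomClass.continuous_of_bound X.mkQ 1
    intro x
    simpa [one_mul] using Submodule.Quotient.norm_mk_le X x
  haveI : FiniteDimensional ℂ ↥(F.map X.mkQ) := Module.Finite.map F X.mkQ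
  have hF' : IsClosed ((F.map X.mkQ : Submodule ℂ (H ⧸ X)) : Set (H ⧸ X)) :=
    Submodule.closed_of_finiteDimensional _
  have heq : (X ⊔ F : Submodule ℂ H) = (F.map X.mkQ).comap X.mkQ := by
    rw [Submodule.comap_map_eq, Submodule.ker_mkQ, sup_comm]
  rw [heq]
  exact hF'.preimage hcont

/-- `dim Xᗮ/Vᗮ = dim V/X` for closed subspaces `X ≤ V` of a Hilbert space. -/
theorem finrank_orth_quot [CompleteSpace H] (X V : Submodule ℂ H) (hXV : X ≤ V)
    (hXc : IsClosed (X : Set H)) (hVc : IsClosed (V : Set H)) :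
    finrank ℂ (↥Xᗮ ⧸ Vᗮ.comap Xᗮ.subtype) = finrank ℂ (↥V ⧸ X.comap V.subtype) := by
  haveI : CompleteSpace ↥V := hVc.completeSpace_coe
  have hVX : Vᗮ ≤ Xᗮ := Submodule.orthogonal_le hXV
  have hsup : Xᗮ ≤ Vᗮ ⊔ (Xᗮ ⊓ V) := by
    have htop : V ⊔ Vᗮ = ⊤ := Submodule.sup_orthogonal_of_hasOrthogonalProjection
    have : Xᗮ = Vᗮ ⊔ (Xᗮ ⊓ V) := by
      rw [sup_comm, inf_sup_assoc_of_le _ hVX, htop, inf_top_eq]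
    exact this.le
  let e1 : (↥(Xᗮ ⊓ V) ⧸ Vᗮ.comap (Xᗮ ⊓ V).subtype) ≃ₗ[ℂ] (↥Xᗮ ⧸ Vᗮ.comap Xᗮ.subtype) :=
    quotEquivSup Vᗮ inf_le_left hVX hsup
  have hbot : Vᗮ.comap (Xᗮ ⊓ V).subtype = ⊥ := by
    rw [eq_bot_iff]
    rintro ⟨v, hv⟩ hmem
    have h2 : (v : H) ∈ V ⊓ Vᗮ := ⟨hv.2, hmem⟩
    rw [Submodule.inf_orthogonal_eq_bot] at h2
    exact (Submodule.mem_bot _).2 (Subtype.ext (by simpa using h2))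
  let e2 : (↥(Xᗮ ⊓ V) ⧸ Vᗮ.comap (Xᗮ ⊓ V).subtype) ≃ₗ[ℂ] ↥(Xᗮ ⊓ V) :=
    Submodule.quotEquivOfEqBot _ hbot
  set K : Submodule ℂ ↥V := X.comap V.subtype with hKdef
  haveI : CompleteSpace ↥K := by
    have hKc : IsClosed (K : Set ↥V) := hXc.preimage continuous_subtype_val
    exact hKc.completeSpace_coe
  have hcompl : IsCompl K Kᗮ := Submodule.isCompl_orthogonal_of_hasOrthogonalProjection
  let e4 : (↥V ⧸ K) ≃ₗ[ℂ] ↥Kᗮ := Submodule.quotientEquivOfIsCompl K Kᗮ hcompl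
  have hKorth : (Xᗮ ⊓ V).comap V.subtype = Kᗮ := by
    ext v
    constructor
    · intro hv
      have hvo : (v : H) ∈ Xᗮ := hv.1
      rw [Submodule.mem_orthogonal]
      intro u hu
      have hu' : (u : H) ∈ X := hu
      rw [Submodule.coe_inner]
      exact (Submodule.mem_orthogonal _ _).1 hvo _ hu'
    · intro hv
      rw [Submodule.mem_orthogonal] at hv
      refine Submodule.mem_comap.2 (Submodule.mem_inf.2 ⟨?_, v.2⟩)
      rw [Submodule.mem_orthogonal]
      intro u hu
      have := hv ⟨u, hXV hu⟩ hu
      rwa [Submodule.coe_inner] at this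
  let e3 : ↥(Xᗮ ⊓ V) ≃ₗ[ℂ] ↥Kᗮ :=
    (Submodule.comapSubtypeEquivOfLe (inf_le_right : Xᗮ ⊓ V ≤ V)).symm.trans
      (LinearEquiv.ofEq _ _ hKorth)
  calc finrank ℂ (↥Xᗮ ⧸ Vᗮ.comap Xᗮ.subtype)
      = finrank ℂ ↥(Xᗮ ⊓ V) := (e1.symm.trans e2).finrank_eq
    _ = finrank ℂ ↥Kᗮ := e3.finrank_eq
    _ = finrank ℂ (↥V ⧸ K) := e4.symm.finrank_eq

end Aux

/-- For closed subspaces `X₁, X₂` of a Hilbert space that are finite rank perturbations of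
each other, the relative index is antisymmetric, `[X₂, X₁] = −[X₁, X₂]`, and the relative
index of the orthogonal complements satisfies `[X₁^⊥, X₂^⊥] = −[X₁, X₂]`. -/
theorem relIdx_antisymm_and_orthogonal {H : Type*} [NormedAddCommGroup H]
    [InnerProductSpace ℂ H] [CompleteSpace H]
    (X₁ X₂ : Submodule ℂ H) (hX₁ : IsClosed (X₁ : Set H)) (hX₂ : IsClosed (X₂ : Set H))
    (Y Y' Y'' : Submodule ℂ H)
    (hY : relIdxWitness X₁ X₂ Y)
    (hY' : relIdxWitness X₂ X₁ Y')
    (hY'' : relIdxWitness X₁ᗮ X₂ᗮ Y'') :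
    relIdxWith X₂ X₁ Y' = -relIdxWith X₁ X₂ Y ∧
    relIdxWith X₁ᗮ X₂ᗮ Y'' = -relIdxWith X₁ X₂ Y := by
  obtain ⟨hA1, hB1, hk⟩ := relIdx_key X₁ X₂ Y hY
  obtain ⟨hA2, hB2, hk'⟩ := relIdx_key X₂ X₁ Y' hY'
  obtain ⟨_, _, hk''⟩ := relIdx_key X₁ᗮ X₂ᗮ Y'' hY''
  rw [inf_comm X₂ X₁] at hk'
  constructor
  · rw [hk, hk']; ring
  · -- The sup `X₁ ⊔ X₂` is closed
    have hVc : IsClosed ((X₁ ⊔ X₂ : Submodule ℂ H) : Set H) := by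
      haveI := hB1
      obtain ⟨F', hF'⟩ := Submodule.exists_isCompl ((X₁ ⊓ X₂).comap X₂.subtype)
      haveI : FiniteDimensional ℂ ↥F' :=
        Module.Finite.equiv (Submodule.quotientEquivOfIsCompl _ _ hF')
      haveI : FiniteDimensional ℂ ↥(F'.map X₂.subtype) := Module.Finite.map F' X₂.subtype
      have hsupF : X₁ ⊔ X₂ = X₁ ⊔ F'.map X₂.subtype := by
        apply le_antisymm
        · refine sup_le le_sup_left ?_
          intro x hx
          have hx2 : (⟨x, hx⟩ : ↥X₂) ∈ ((X₁ ⊓ X₂).comap X₂.subtype ⊔ F') := by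
            rw [hF'.codisjoint.eq_top]; trivial
          obtain ⟨w, hw, f, hf, hwf⟩ := Submodule.mem_sup.1 hx2
          have hxwf : x = (w : H) + (f : H) := by
            have := congrArg (X₂.subtype) hwf
            simpa using this.symm
          rw [hxwf]
          have hw1 : (w : H) ∈ X₁ := hw.1
          exact Submodule.add_mem _ (Submodule.mem_sup_left hw1)
            (Submodule.mem_sup_right ⟨f, hf, rfl⟩)
        · exact sup_le le_sup_left
            (le_trans (Submodule.map_subtype_le X₂ F') le_sup_right)
      rw [hsupF]
      exact isClosed_sup_of_finiteDimensional hX₁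
    have h1 := finrank_orth_quot X₁ (X₁ ⊔ X₂) le_sup_left hX₁ hVc
    have h2 := finrank_orth_quot X₂ (X₁ ⊔ X₂) le_sup_right hX₂ hVc
    have h3 : Module.finrank ℂ (↥(X₁ ⊔ X₂) ⧸ X₁.comap (X₁ ⊔ X₂).subtype)
        = Module.finrank ℂ (↥X₂ ⧸ ((X₁ ⊓ X₂).comap X₂.subtype)) := by
      have e := (LinearMap.quotientInfEquivSupQuotient X₂ X₁).symm
      rw [sup_comm X₂ X₁, ← Submodule.comap_inf, inf_comm X₂ X₁] at e
      exact e.finrank_eq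
    have h4 : Module.finrank ℂ (↥(X₁ ⊔ X₂) ⧸ X₂.comap (X₁ ⊔ X₂).subtype)
        = Module.finrank ℂ (↥X₁ ⧸ ((X₁ ⊓ X₂).comap X₁.subtype)) := by
      exact (LinearMap.quotientInfEquivSupQuotient X₁ X₂).symm.finrank_eq
    rw [Submodule.inf_orthogonal] at hk''
    rw [hk'', hk, h1, h2, h3, h4]
    ring
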